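/- Let n be a positive squarefree integer and Y ≥ 1. The number of reducible monic cubic polynomials f(x) = x³ + tx² + Ax + B with t ∈ {-1,0,1}, A, B ∈ ℤ, nonzero discriminant, all complex roots of absolute value < Y, and n | ind-type condition n² | Δ(f), is ≪_ε Y³/n^{1-ε} + n^ε Y. -/

import Mathlib

open Polynomial

/-- Discriminant of the monic cubic `x³ + kx² + Ax + B`. -/
def disc3 (k A B : ℤ) : ℤ :=
  18*k*A*B - 4*k^3*B + k^2*A^2 - 4*A^3 - 27*B^2

/-- The monic cubic polynomial `x³ + kx² + Ax + B`. -/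
noncomputable def cubic (k A B : ℤ) : Polynomial ℤ :=
  X^3 + C k * X^2 + C A * X + C B

/-- The index of `ℤ[x]/(f)` in the maximal order (the integral closure of `ℤ`)
of `ℚ[x]/(f)`. -/
noncomputable def polyIndex (f : Polynomial ℤ) : ℕ :=
  ((Subalgebra.toSubmodule (Algebra.adjoin ℤ
      ({AdjoinRoot.root (f.map (Int.castRingHom ℚ))} :
        Set (AdjoinRoot (f.map (Int.castRingHom ℚ)))))).toAddSubgroup).relIndex
    ((Subalgebra.toSubmodule (integralClosure ℤ
      (AdjoinRoot (f.map (Int.castRingHom ℚ))))).toAddSubgroup)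

lemma tau_bound (ε : ℝ) (hε : 0 < ε) : ∃ C : ℝ, 0 < C ∧ ∀ n : ℕ, Squarefree n →
    (n.divisors.card : ℝ) ≤ C * (n : ℝ) ^ ε := by
  set T : ℕ := ⌈(2:ℝ) ^ (1/ε)⌉₊ with hT
  refine ⟨2 ^ (T+1), by positivity, fun n hsf => ?_⟩
  have hn0 : n ≠ 0 := hsf.ne_zero
  -- divisors injects into powerset of primeFactors
  have h1 : n.divisors.card ≤ 2 ^ n.primeFactors.card := by
    rw [← Finset.card_powerset]
    apply Finset.card_le_card_of_injOn Nat.primeFactors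
    · intro d hd
      rw [Finset.mem_coe, Finset.mem_powerset]
      exact Nat.primeFactors_mono (Nat.dvd_of_mem_divisors hd) hn0
    · intro a ha b hb hab
      have ha' : Squarefree a := hsf.squarefree_of_dvd (Nat.dvd_of_mem_divisors ha)
      have hb' : Squarefree b := hsf.squarefree_of_dvd (Nat.dvd_of_mem_divisors hb)
      rw [← Nat.prod_primeFactors_of_squarefree ha', ← Nat.prod_primeFactors_of_squarefree hb', hab]
  -- split primeFactors
  set P := n.primeFactors with hP
  set P1 := P.filter (· ≤ T) with hP1
  set P2 := P.filter (¬ · ≤ T) with hP2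
  have hsplit : P1.card + P2.card = P.card := Finset.card_filter_add_card_filter_not _
  have hP1le : P1.card ≤ T + 1 := by
    apply le_trans (Finset.card_le_card (t := Finset.range (T+1)) ?_) (by simp)
    intro p hp
    rw [hP1, Finset.mem_filter] at hp
    simpa [Nat.lt_succ_iff] using hp.2
  -- 2 ^ P2.card ≤ n ^ ε
  have h2 : (2:ℝ) ^ P2.card ≤ (n:ℝ) ^ ε := by
    have key : ∀ p ∈ P2, (2:ℝ) ≤ (p:ℝ) ^ ε := by
      intro p hp
      rw [hP2, Finset.mem_filter] at hp
      have hpT : T < p := Nat.lt_of_not_le hp.2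
      have hp2 : (2:ℝ) ^ (1/ε) ≤ (p:ℝ) := by
        calc (2:ℝ) ^ (1/ε) ≤ (T:ℝ) := by exact_mod_cast Nat.le_ceil _
          _ ≤ (p:ℝ) := by exact_mod_cast hpT.le
      calc (2:ℝ) = ((2:ℝ) ^ (1/ε)) ^ ε := by
            rw [← Real.rpow_mul (by norm_num), one_div, inv_mul_cancel₀ hε.ne',
              Real.rpow_one]
          _ ≤ (p:ℝ) ^ ε := by
            apply Real.rpow_le_rpow (by positivity) hp2 hε.le
    calc (2:ℝ) ^ P2.card = ∏ _p ∈ P2, (2:ℝ) := by rw [Finset.prod_const]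
      _ ≤ ∏ p ∈ P2, (p:ℝ) ^ ε := Finset.prod_le_prod (by intros; norm_num) key
      _ ≤ ∏ p ∈ P, (p:ℝ) ^ ε := by
          have hone : ∀ p ∈ P, (1:ℝ) ≤ (p:ℝ) ^ ε := by
            intro p hp
            have : (1:ℝ) ≤ (p:ℝ) := by
              exact_mod_cast (Nat.prime_of_mem_primeFactors hp).one_lt.le
            exact Real.one_le_rpow this hε.le
          have h11 : (1:ℝ) ≤ ∏ p ∈ P1, (p:ℝ) ^ ε := by
            rw [← Finset.prod_const_one (s := P1)]
            exact Finset.prod_le_prod (by intros; norm_num)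
              (fun p hp => hone p (Finset.filter_subset _ _ hp))
          have hsplitP : (∏ p ∈ P1, (p:ℝ) ^ ε) * ∏ p ∈ P2, (p:ℝ) ^ ε = ∏ p ∈ P, (p:ℝ) ^ ε :=
            Finset.prod_filter_mul_prod_filter_not P _ _
          rw [← hsplitP]
          have hnn : (0:ℝ) ≤ ∏ p ∈ P2, (p:ℝ) ^ ε :=
            Finset.prod_nonneg (by intros; positivity)
          nlinarith [mul_le_mul_of_nonneg_right h11 hnn]
      _ = ((∏ p ∈ P, (p:ℝ))) ^ ε := Real.finset_prod_rpow _ _ (by intros; positivity) _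
      _ = (n:ℝ) ^ ε := by
          congr 1
          rw [← Nat.cast_prod]
          exact_mod_cast congrArg (Nat.cast : ℕ → ℝ) (Nat.prod_primeFactors_of_squarefree hsf)
  calc (n.divisors.card : ℝ) ≤ (2:ℝ) ^ P.card := by exact_mod_cast h1
    _ = (2:ℝ) ^ P1.card * 2 ^ P2.card := by rw [← pow_add, hsplit]
    _ ≤ 2 ^ (T+1) * (n:ℝ) ^ ε := by
        apply mul_le_mul _ h2 (by positivity) (by positivity)
        exact pow_le_pow_right₀ (by norm_num) hP1le

open Polynomial


/-- relation used for the injection -/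
def Qrel (x : ℤ×ℤ×ℤ) (y : ℤ × ℤ × (ℕ×ℕ) × ℤ) : Prop :=
  y.1 = x.1 ∧
  x.2.2 = -(y.2.1*(x.2.1 + y.2.1*(x.1+y.2.1))) ∧
  ((y.2.2.1.1 : ℤ)) ∣ y.2.1^2 + (x.1+y.2.1)*y.2.1 + (x.2.1 + y.2.1*(x.1+y.2.1)) ∧
  ((y.2.2.1.2 : ℤ))^2 ∣ (x.1+y.2.1)^2 - 4*(x.2.1 + y.2.1*(x.1+y.2.1)) ∧
  y.2.2.2 = (4*(x.2.1 + y.2.1*(x.1+y.2.1))) / ((y.2.2.1.1:ℤ)*(y.2.2.1.2:ℤ)^2)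

lemma coprime_of_squarefree_mul {d e : ℕ} (h : Squarefree (d*e)) : Nat.Coprime d e := by
  have hg : Nat.gcd d e * Nat.gcd d e ∣ d * e :=
    mul_dvd_mul (Nat.gcd_dvd_left _ _) (Nat.gcd_dvd_right _ _)
  exact Nat.isUnit_iff.mp (h _ hg)

lemma Qrel_rigid {n : ℕ} (hsf : Squarefree n) {x x' : ℤ×ℤ×ℤ} {y : ℤ×ℤ×(ℕ×ℕ)×ℤ}
    (hy : y.2.2.1.1 * y.2.2.1.2 = n) (h : Qrel x y) (h' : Qrel x' y) : x = x' := by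
  obtain ⟨k, A, B⟩ := x
  obtain ⟨k', A', B'⟩ := x'
  obtain ⟨k₀, r, ⟨d, e⟩, i⟩ := y
  simp only [Qrel] at h h'
  obtain ⟨hk, hB, hdv, heu, hi⟩ := h
  obtain ⟨hk', hB', hdv', heu', hi'⟩ := h'
  simp only at hk hB hdv heu hi hk' hB' hdv' heu' hi' hy
  subst hk
  subst hk'
  -- coprimality
  have hsf' : Squarefree (d * e) := by rwa [hy]
  have hcop : Nat.Coprime d e := coprime_of_squarefree_mul hsf'
  have hcopZ : IsCoprime (d:ℤ) ((e:ℤ)^2) := by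
    have : IsCoprime (d:ℤ) (e:ℤ) := Int.isCoprime_iff_gcd_eq_one.mpr (by simpa [Int.gcd] using hcop)
    exact this.pow_right
  set b : ℤ := A + r*(k₀+r) with hb
  set b' : ℤ := A' + r*(k₀+r) with hb'
  have hdd : (d:ℤ) ∣ 4*b - 4*b' := by
    have := dvd_sub hdv hdv'
    have h2 : (d:ℤ) ∣ b - b' := by
      convert this using 1
      · rfl
      · ring
    calc (d:ℤ) ∣ b - b' := h2
      _ ∣ 4*b - 4*b' := ⟨4, by ring⟩
  have hee : ((e:ℤ))^2 ∣ 4*b - 4*b' := by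
    have := dvd_sub heu' heu
    convert this using 1
    · rfl
    · ring
  have hm : (d:ℤ)*(e:ℤ)^2 ∣ 4*b - 4*b' := hcopZ.mul_dvd hdd hee
  set m : ℤ := (d:ℤ)*(e:ℤ)^2 with hmdef
  have hmod : (4*b) % m = (4*b') % m := by
    have : (4*b) ≡ (4*b') [ZMOD m] := Int.ModEq.symm ((Int.modEq_iff_dvd).mpr hm)
    exact this
  have he1 : m * ((4*b)/m) + (4*b) % m = 4*b := Int.mul_ediv_add_emod _ _
  have he2 : m * ((4*b')/m) + (4*b') % m = 4*b' := Int.mul_ediv_add_emod _ _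
  have hbb : b = b' := by
    rw [← hi] at he1
    rw [← hi'] at he2
    omega
  have hAA : A = A' := by omega
  have hBB : B = B' := by rw [hB, hB', hbb]
  subst hAA hBB
  rfl

lemma split_dvd {n : ℕ} (hsf : Squarefree n) {u v : ℤ} (h : (n:ℤ)^2 ∣ u * v^2) :
    ∃ d e : ℕ, d * e = n ∧ (d:ℤ) ∣ v ∧ ((e:ℤ))^2 ∣ u := by
  have hn0 : n ≠ 0 := hsf.ne_zero
  set d : ℕ := n.gcd v.natAbs with hd
  have hdn : d ∣ n := Nat.gcd_dvd_left _ _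
  set e : ℕ := n / d with he
  have hde : d * e = n := Nat.mul_div_cancel' hdn
  have hdv : (d:ℤ) ∣ v := Int.dvd_natAbs.mp (Int.natCast_dvd_natCast.mpr (Nat.gcd_dvd_right _ _))
  have hcop : Nat.Coprime d e := by
    have hg : Nat.gcd d e * Nat.gcd d e ∣ n := by
      rw [← hde]
      exact mul_dvd_mul (Nat.gcd_dvd_left _ _) (Nat.gcd_dvd_right _ _)
    exact Nat.isUnit_iff.mp (hsf _ hg)
  have hev : Nat.Coprime e v.natAbs := by
    have h1 : Nat.gcd e v.natAbs ∣ d := Nat.dvd_gcd ((Nat.gcd_dvd_left _ _).trans (Nat.div_dvd_of_dvd hdn)) (Nat.gcd_dvd_right _ _)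
    have h2 : Nat.gcd e v.natAbs ∣ Nat.gcd d e := Nat.dvd_gcd h1 (Nat.gcd_dvd_left _ _)
    rw [hcop] at h2
    exact Nat.dvd_one.mp h2
  refine ⟨d, e, hde, hdv, ?_⟩
  have hcop2 : IsCoprime ((e:ℤ)^2) (v^2) := by
    have : IsCoprime (e:ℤ) v := Int.isCoprime_iff_gcd_eq_one.mpr (by simpa [Int.gcd] using hev)
    exact (this.pow : _)
  apply hcop2.dvd_of_dvd_mul_right
  have hen : (e:ℤ)^2 ∣ (n:ℤ)^2 := by
    apply pow_dvd_pow_of_dvd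
    exact_mod_cast Nat.div_dvd_of_dvd hdn
  exact hen.trans h

lemma elem_data {n : ℕ} {Y : ℝ} (hY : 1 ≤ Y) {k A B : ℤ}
    (hsf : Squarefree n)
    (hroot : ∃ r : ℤ, (cubic k A B).eval r = 0)
    (hdvd : (n:ℤ)^2 ∣ disc3 k A B)
    (hz : ∀ z : ℂ, (Polynomial.aeval z) (cubic k A B) = 0 → ‖z‖ < Y) :
    ∃ r : ℤ, ∃ d e : ℕ,
      |(r:ℝ)| < Y ∧
      B = -(r*(A + r*(k+r))) ∧
      |((A + r*(k+r) : ℤ):ℝ)| < Y^2 ∧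
      d * e = n ∧ (d:ℤ) ∣ r^2 + (k+r)*r + (A + r*(k+r)) ∧
      ((e:ℤ))^2 ∣ (k+r)^2 - 4*(A + r*(k+r)) := by
  obtain ⟨r, hr⟩ := hroot
  have hr' : r^3 + k*r^2 + A*r + B = 0 := by
    have := hr
    simp [cubic] at this
    linarith
  set b : ℤ := A + r*(k+r) with hb
  have hB : B = -(r*b) := by rw [hb]; linarith [hr']
  -- aeval formula
  have haeval : ∀ z : ℂ, (Polynomial.aeval z) (cubic k A B)
      = z^3 + (k:ℂ)*z^2 + (A:ℂ)*z + (B:ℂ) := by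
    intro z
    simp [cubic]
    try ring
  have hBc : (B:ℂ) = -((r:ℂ)*((A:ℂ) + (r:ℂ)*((k:ℂ)+(r:ℂ)))) := by
    exact_mod_cast congrArg (fun t : ℤ => (t:ℂ)) hB
  have key : ∀ z : ℂ, z^3 + (k:ℂ)*z^2 + (A:ℂ)*z + (B:ℂ)
      = (z - (r:ℂ)) * (z^2 + ((k:ℂ)+(r:ℂ))*z + ((A:ℂ) + (r:ℂ)*((k:ℂ)+(r:ℂ)))) := by
    intro z
    linear_combination hBc
  -- bound on r
  have hrY : |(r:ℝ)| < Y := by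
    have h0 : (Polynomial.aeval ((r:ℤ):ℂ)) (cubic k A B) = 0 := by
      rw [haeval, key]
      ring
    have := hz _ h0
    simpa using this
  -- complex roots of the quadratic
  obtain ⟨w, hw⟩ := IsAlgClosed.exists_pow_nat_eq (k := ℂ)
    (((k:ℂ)+(r:ℂ))^2 - 4*((A:ℂ) + (r:ℂ)*((k:ℂ)+(r:ℂ)))) (n := 2) (by norm_num)
  have hquad : ∀ z : ℂ, z^2 + ((k:ℂ)+(r:ℂ))*z + ((A:ℂ) + (r:ℂ)*((k:ℂ)+(r:ℂ))) = 0 →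
      ‖z‖ < Y := by
    intro z hzq
    apply hz
    rw [haeval, key, hzq]
    ring
  have habs1 : ‖(-((k:ℂ)+(r:ℂ))+w)/2‖ < Y := by
    apply hquad
    linear_combination (1/4 : ℂ) * hw
  have habs2 : ‖(-((k:ℂ)+(r:ℂ))-w)/2‖ < Y := by
    apply hquad
    linear_combination (1/4 : ℂ) * hw
  have hprod : ((-((k:ℂ)+(r:ℂ))+w)/2) * ((-((k:ℂ)+(r:ℂ))-w)/2)
      = ((A:ℂ) + (r:ℂ)*((k:ℂ)+(r:ℂ))) := by
    linear_combination (-1/4 : ℂ) * hw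
  have hbY : |((b:ℤ):ℝ)| < Y^2 := by
    have h1 : ‖((b:ℤ):ℂ)‖ = |((b:ℤ):ℝ)| := Complex.norm_intCast b
    have h2 : ((b:ℤ):ℂ) = ((-((k:ℂ)+(r:ℂ))+w)/2) * ((-((k:ℂ)+(r:ℂ))-w)/2) := by
      rw [hprod, hb]
      push_cast
      ring
    rw [← h1, h2, norm_mul]
    have hY0 : (0:ℝ) < Y := lt_of_lt_of_le one_pos hY
    calc ‖_‖ * ‖_‖ < Y * Y :=
          mul_lt_mul'' habs1 habs2 (norm_nonneg _) (norm_nonneg _)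
      _ = Y^2 := (sq Y).symm
  -- discriminant factorization
  have hdisc : disc3 k A B = ((k+r)^2 - 4*b) * (r^2 + (k+r)*r + b)^2 := by
    rw [hB, hb]
    unfold disc3
    ring
  rw [hdisc] at hdvd
  obtain ⟨d, e, hde, hdv, heu⟩ := split_dvd hsf hdvd
  exact ⟨r, d, e, hrY, hB, hbY, hde, hdv, heu⟩



set_option maxHeartbeats 2000000 in
theorem stmt7 : ∀ ε : ℝ, 0 < ε → ∃ C : ℝ, 0 < C ∧
    ∀ n : ℕ, 0 < n → Squarefree n → ∀ Y : ℝ, 1 ≤ Y →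
      (Nat.card {x : ℤ × ℤ × ℤ //
          x.1 ∈ ({-1, 0, 1} : Set ℤ) ∧
          (∃ r : ℤ, (cubic x.1 x.2.1 x.2.2).eval r = 0) ∧
          disc3 x.1 x.2.1 x.2.2 ≠ 0 ∧
          (n : ℤ)^2 ∣ disc3 x.1 x.2.1 x.2.2 ∧
          (∀ z : ℂ, (Polynomial.aeval z) (cubic x.1 x.2.1 x.2.2) = 0 →
            ‖z‖ < Y)} : ℝ) ≤
        C * (Y^3 / (n : ℝ)^(1 - ε) + (n : ℝ)^ε * Y) := by
  intro ε hε
  obtain ⟨C₀, hC₀, hτ⟩ := tau_bound ε hε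
  refine ⟨200*C₀, by positivity, ?_⟩
  intro n hn hsf Y hY
  have hY0 : (0:ℝ) < Y := lt_of_lt_of_le one_pos hY
  have hn0 : (0:ℝ) < (n:ℝ) := by exact_mod_cast hn
  obtain ⟨RY, hRY⟩ : ∃ RY : ℤ, RY = ⌊Y⌋ := ⟨_, rfl⟩
  obtain ⟨NZ, hNZ⟩ : ∃ NZ : ℤ, NZ = ⌈Y^2⌉ := ⟨_, rfl⟩
  obtain ⟨L, hL⟩ : ∃ L : ℤ, L = 4*NZ / (n:ℤ) + 1 := ⟨_, rfl⟩
  obtain ⟨K, hK⟩ : ∃ K : Finset ℤ, K = {-1,0,1} := ⟨_, rfl⟩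
  obtain ⟨F, hF⟩ : ∃ F : Finset (ℤ × ℤ × (ℕ×ℕ) × ℤ),
    F = K ×ˢ (Finset.Icc (-RY) RY) ×ˢ ((Nat.divisorsAntidiagonal n) ×ˢ (Finset.Icc (-L) L)) := ⟨_, rfl⟩
  -- step 1: the key existence
  have key : ∀ x : {x : ℤ × ℤ × ℤ //
          x.1 ∈ ({-1, 0, 1} : Set ℤ) ∧
          (∃ r : ℤ, (cubic x.1 x.2.1 x.2.2).eval r = 0) ∧
          disc3 x.1 x.2.1 x.2.2 ≠ 0 ∧
          (n : ℤ)^2 ∣ disc3 x.1 x.2.1 x.2.2 ∧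
          (∀ z : ℂ, (Polynomial.aeval z) (cubic x.1 x.2.1 x.2.2) = 0 →
            ‖z‖ < Y)},
      ∃ y : ℤ × ℤ × (ℕ×ℕ) × ℤ, y ∈ F ∧ Qrel x.val y := by
    intro x
    obtain ⟨hk, hroot, hne, hdvd, hz⟩ := x.2
    obtain ⟨r, d, e, hrY, hB, hbY, hde, hdv, heu⟩ := elem_data hY hsf hroot hdvd hz
    obtain ⟨b, hb⟩ : ∃ b : ℤ, b = x.val.2.1 + r*(x.val.1+r) := ⟨_, rfl⟩
    obtain ⟨m, hm⟩ : ∃ m : ℤ, m = (d:ℤ)*(e:ℤ)^2 := ⟨_, rfl⟩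
    obtain ⟨i, hi⟩ : ∃ i : ℤ, i = 4*b / m := ⟨_, rfl⟩
    have hd1 : 0 < d := Nat.pos_of_ne_zero (by rintro rfl; rw [zero_mul] at hde; omega)
    have he1 : 0 < e := Nat.pos_of_ne_zero (by rintro rfl; rw [mul_zero] at hde; omega)
    have hd1Z : (1:ℤ) ≤ (d:ℤ) := by exact_mod_cast hd1
    have he1Z : (1:ℤ) ≤ (e:ℤ) := by exact_mod_cast he1
    have hdeZ : (d:ℤ)*(e:ℤ) = (n:ℤ) := by exact_mod_cast hde
    have hmn : (n:ℤ) ≤ m := by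
      have hfac : (d:ℤ)*(e:ℤ)^2 - (d:ℤ)*(e:ℤ) = (d:ℤ)*(e:ℤ)*((e:ℤ)-1) := by ring
      have hnn : (0:ℤ) ≤ (d:ℤ)*(e:ℤ)*((e:ℤ)-1) :=
        mul_nonneg (mul_nonneg (by linarith) (by linarith)) (by linarith)
      rw [hm, ← hdeZ]
      linarith
    have hnZ : (0:ℤ) < (n:ℤ) := by exact_mod_cast hn
    have hm0 : (0:ℤ) < m := lt_of_lt_of_le hnZ hmn
    -- |b| ≤ NZ
    have hbNZ : -NZ ≤ b ∧ b ≤ NZ := by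
      have hup : ((b:ℤ):ℝ) < (NZ:ℝ) := by
        calc ((b:ℤ):ℝ) ≤ |((b:ℤ):ℝ)| := le_abs_self _
          _ < Y^2 := by rw [hb]; exact hbY
          _ ≤ ((NZ:ℤ):ℝ) := by rw [hNZ]; exact Int.le_ceil _
      have hlo : (-(NZ:ℝ)) < ((b:ℤ):ℝ) := by
        have : -((b:ℤ):ℝ) ≤ |((b:ℤ):ℝ)| := neg_le_abs _
        have h2 : |((b:ℤ):ℝ)| < ((NZ:ℤ):ℝ) := by
          calc |((b:ℤ):ℝ)| < Y^2 := by rw [hb]; exact hbY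
            _ ≤ ((NZ:ℤ):ℝ) := by rw [hNZ]; exact Int.le_ceil _
        linarith
      constructor
      · exact_mod_cast le_of_lt (by exact_mod_cast hlo : -NZ < b)
      · exact_mod_cast le_of_lt (by exact_mod_cast hup : b < NZ)
    -- bounds on i
    have e1 : i*m ≤ 4*b := by rw [hi]; exact Int.ediv_mul_le _ hm0.ne'
    have e7 : 4*b < (i+1)*m := by rw [hi]; exact Int.lt_ediv_add_one_mul_self _ hm0
    have e2 : 4*NZ < (4*NZ/(n:ℤ) + 1)*(n:ℤ) := Int.lt_ediv_add_one_mul_self _ hnZ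
    have e2' : (4*NZ/(n:ℤ) + 1)*(n:ℤ) = (4*NZ/(n:ℤ))*(n:ℤ) + (n:ℤ) := by ring
    have hq0 : (0:ℤ) ≤ 4*NZ / (n:ℤ) := Int.ediv_nonneg (by linarith [hbNZ.1, hbNZ.2]) hnZ.le
    have hiL : i ≤ L := by
      by_contra hcon
      push_neg at hcon
      have hLi : L + 1 ≤ i := hcon
      have hipos : (0:ℤ) ≤ i := by rw [hL] at hLi; omega
      have e3 : i*(n:ℤ) ≤ i*m := mul_le_mul_of_nonneg_left hmn hipos
      have e4 : (L+1)*(n:ℤ) ≤ i*(n:ℤ) := mul_le_mul_of_nonneg_right hLi hnZ.le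
      have e5 : (L+1)*(n:ℤ) = (4*NZ/(n:ℤ))*(n:ℤ) + 2*(n:ℤ) := by rw [hL]; ring
      linarith [hbNZ.2]
    have hiL' : -L ≤ i := by
      by_contra hcon
      push_neg at hcon
      have hLi : i + 1 ≤ -L := by omega
      have hineg : i + 1 ≤ 0 := by rw [hL] at hLi; omega
      have e8 : (i+1)*m ≤ (i+1)*(n:ℤ) := mul_le_mul_of_nonpos_left hmn hineg
      have e9 : (i+1)*(n:ℤ) ≤ (-L)*(n:ℤ) := mul_le_mul_of_nonneg_right hLi hnZ.le
      have e10 : (-L)*(n:ℤ) = -((4*NZ/(n:ℤ))*(n:ℤ)) - (n:ℤ) := by rw [hL]; ring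
      linarith [hbNZ.1]
    -- assemble
    refine ⟨(x.val.1, r, (d,e), i), ?_, ?_⟩
    · rw [hF]
      simp only [Finset.mem_product]
      refine ⟨?_, ?_, ?_, ?_⟩
      · rw [hK]
        simpa using hk
      · rw [Finset.mem_Icc]
        constructor
        · rw [hRY]
          have : (-r : ℝ) ≤ Y := by
            calc (-r : ℝ) = -((r:ℤ):ℝ) := by push_cast; ring
              _ ≤ |((r:ℤ):ℝ)| := neg_le_abs _
              _ ≤ Y := hrY.le
          have h2 : -r ≤ ⌊Y⌋ := Int.le_floor.mpr (by exact_mod_cast this)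
          omega
        · rw [hRY]
          exact Int.le_floor.mpr (by exact_mod_cast (le_abs_self _).trans hrY.le)
      · exact Nat.mem_divisorsAntidiagonal.mpr ⟨hde, hn.ne'⟩
      · rw [Finset.mem_Icc]
        exact ⟨hiL', hiL⟩
    · refine ⟨rfl, ?_, ?_, ?_, ?_⟩
      · exact hB
      · exact hdv
      · exact heu
      · show i = _
        rw [hi, hb, hm]
  -- step 2: injection
  have hcard : Nat.card {x : ℤ × ℤ × ℤ //
          x.1 ∈ ({-1, 0, 1} : Set ℤ) ∧
          (∃ r : ℤ, (cubic x.1 x.2.1 x.2.2).eval r = 0) ∧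
          disc3 x.1 x.2.1 x.2.2 ≠ 0 ∧
          (n : ℤ)^2 ∣ disc3 x.1 x.2.1 x.2.2 ∧
          (∀ z : ℂ, (Polynomial.aeval z) (cubic x.1 x.2.1 x.2.2) = 0 →
            ‖z‖ < Y)} ≤ F.card := by
    rw [← Nat.card_eq_finsetCard F]
    apply Nat.card_le_card_of_injective (fun x => (⟨(key x).choose, (key x).choose_spec.1⟩ : {y // y ∈ F}))
    intro x x' hxx
    set y1 := (key x).choose with hy1
    set y2 := (key x').choose with hy2
    have q1 : Qrel x.val y1 := (key x).choose_spec.2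
    have q2 : Qrel x'.val y2 := (key x').choose_spec.2
    have hyy : y1 = y2 := congrArg Subtype.val hxx
    rw [hyy] at q1
    -- antidiagonal membership
    have hymem : y2 ∈ F := (key x').choose_spec.1
    rw [hF] at hymem
    simp only [Finset.mem_product] at hymem
    have hde : y2.2.2.1.1 * y2.2.2.1.2 = n :=
      (Nat.mem_divisorsAntidiagonal.mp hymem.2.2.1).1
    exact Subtype.ext (Qrel_rigid hsf hde q1 q2)
  -- step 3: card of F
  have hFcard : (F.card : ℝ) ≤ (3:ℝ) * (3*Y) * (C₀ * (n:ℝ)^ε) * (16*Y^2/(n:ℝ) + 3) := by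
    have hKcard : K.card = 3 := by rw [hK]; decide
    have hRY1 : (1:ℤ) ≤ RY := by
      rw [hRY]
      exact Int.le_floor.mpr (by exact_mod_cast hY)
    have h1 : ((Finset.Icc (-RY) RY).card : ℝ) ≤ 3*Y := by
      rw [Int.card_Icc, show RY + 1 - -RY = 2*RY+1 by ring]
      have hnn : (0:ℤ) ≤ 2*RY+1 := by omega
      have hcast : (((2*RY+1).toNat : ℕ) : ℝ) = ((2*RY+1 : ℤ) : ℝ) := by
        exact_mod_cast congrArg (fun z : ℤ => (z:ℝ)) (Int.toNat_of_nonneg hnn)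
      rw [hcast]
      push_cast
      have := Int.floor_le Y
      rw [hRY] at *
      nlinarith [this, hY]
    have h2 : ((n.divisorsAntidiagonal).card : ℝ) ≤ C₀ * (n:ℝ)^ε := by
      have hle : (n.divisorsAntidiagonal).card ≤ n.divisors.card := by
        apply Finset.card_le_card_of_injOn Prod.fst
          (fun p hp => Nat.fst_mem_divisors_of_mem_antidiagonal hp)
        intro p hp q hq hpq
        simp only [Finset.mem_coe] at hp hq
        have hp' := (Nat.mem_divisorsAntidiagonal.mp hp).1
        have hq' := (Nat.mem_divisorsAntidiagonal.mp hq).1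
        have hp1 : p.1 ≠ 0 := by
          intro h0
          rw [h0, zero_mul] at hp'
          omega
        apply Prod.ext hpq
        apply Nat.eq_of_mul_eq_mul_left (Nat.pos_of_ne_zero hp1)
        rw [hp', hpq]
        exact hq'.symm
      calc ((n.divisorsAntidiagonal).card : ℝ) ≤ (n.divisors.card : ℝ) := by exact_mod_cast hle
        _ ≤ C₀ * (n:ℝ)^ε := hτ n hsf
    have hNZ1 : (1:ℤ) ≤ NZ := by
      rw [hNZ]
      have : (0:ℝ) < Y^2 := by positivity
      exact Int.ceil_pos.mpr this
    have hq0 : (0:ℤ) ≤ 4*NZ / (n:ℤ) := Int.ediv_nonneg (by omega) (by exact_mod_cast hn.le)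
    have h3 : ((Finset.Icc (-L) L).card : ℝ) ≤ 16*Y^2/(n:ℝ) + 3 := by
      rw [Int.card_Icc, show L + 1 - -L = 2*L+1 by ring]
      have hnn : (0:ℤ) ≤ 2*L+1 := by rw [hL]; omega
      have hcast : (((2*L+1).toNat : ℕ) : ℝ) = ((2*L+1 : ℤ) : ℝ) := by
        exact_mod_cast congrArg (fun z : ℤ => (z:ℝ)) (Int.toNat_of_nonneg hnn)
      rw [hcast]
      have hqn : (4*NZ / (n:ℤ)) * (n:ℤ) ≤ 4*NZ := Int.ediv_mul_le _ (by exact_mod_cast hn.ne')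
      have hqr : ((4*NZ / (n:ℤ) : ℤ) : ℝ) ≤ 8*Y^2/(n:ℝ) := by
        rw [le_div_iff₀ hn0]
        have hcast2 : ((4*NZ / (n:ℤ) : ℤ) : ℝ) * (n:ℝ) ≤ ((4*NZ : ℤ) : ℝ) := by
          exact_mod_cast hqn
        have hNZr : ((NZ:ℤ):ℝ) < Y^2 + 1 := by
          rw [hNZ]
          exact Int.ceil_lt_add_one ((Y:ℝ)^(2:ℕ))
        have hY2 : (1:ℝ) ≤ Y^2 := by nlinarith
        push_cast at hcast2 ⊢
        nlinarith
      rw [hL]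
      have hdiv : 16 * Y ^ 2 / (n:ℝ) + 3 = 2*(8*Y^2/(n:ℝ)) + 3 := by ring
      rw [hdiv]
      push_cast
      push_cast at hqr
      linarith
    rw [hF, Finset.card_product, Finset.card_product, Finset.card_product]
    calc ((K.card * ((Finset.Icc (-RY) RY).card * ((n.divisorsAntidiagonal).card * (Finset.Icc (-L) L).card)) : ℕ) : ℝ)
        = 3 * (((Finset.Icc (-RY) RY).card : ℝ) * (((n.divisorsAntidiagonal).card : ℝ) * ((Finset.Icc (-L) L).card : ℝ))) := by
          rw [hKcard]; push_cast; ring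
      _ ≤ 3 * ((3*Y) * ((C₀ * (n:ℝ)^ε) * (16*Y^2/(n:ℝ) + 3))) := by
          have p1 : (0:ℝ) ≤ 3*Y := by positivity
          have p2 : (0:ℝ) ≤ C₀ * (n:ℝ)^ε := by positivity
          have p3 : (0:ℝ) ≤ 16*Y^2/(n:ℝ) + 3 := by positivity
          gcongr
          all_goals first | exact h1 | exact h2 | exact h3 | positivity
      _ = (3:ℝ) * (3*Y) * (C₀ * (n:ℝ)^ε) * (16*Y^2/(n:ℝ) + 3) := by ring
  -- step 4: conclude
  calc (Nat.card _ : ℝ) ≤ (F.card : ℝ) := by exact_mod_cast hcard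
    _ ≤ (3:ℝ) * (3*Y) * (C₀ * (n:ℝ)^ε) * (16*Y^2/(n:ℝ) + 3) := hFcard
    _ ≤ 200*C₀ * (Y^3 / (n : ℝ)^(1 - ε) + (n : ℝ)^ε * Y) := by
        have hrw : Y^3 / (n : ℝ)^(1 - ε) = Y^3 * (n:ℝ)^ε / (n:ℝ) := by
          rw [Real.rpow_sub hn0, Real.rpow_one]
          field_simp
        rw [hrw]
        have hre : (0:ℝ) < (n:ℝ)^ε := Real.rpow_pos_of_pos hn0 ε
        have h1 : (0:ℝ) ≤ Y := hY0.le
        have expand : (3:ℝ) * (3*Y) * (C₀ * (n:ℝ)^ε) * (16*Y^2/(n:ℝ) + 3)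
            = C₀ * (144 * (Y^3 * (n:ℝ)^ε / (n:ℝ)) + 27 * ((n:ℝ)^ε * Y)) := by
          field_simp
          ring
        rw [expand]
        have t1 : (0:ℝ) ≤ Y^3 * (n:ℝ)^ε / (n:ℝ) := by positivity
        have t2 : (0:ℝ) ≤ (n:ℝ)^ε * Y := by positivity
        nlinarith [hC₀.le]
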